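/- Let f be a weakly decreasing, nonconstant, piecewise continuous function on [0,1] with f(1) = 0. Then the limiting variance σ²(γ, f) converges, as γ tends to 0 from the right, to ∫₀¹ f(s)² ds − ( ∫₀¹ f(s) ds )² + ∫₀¹ (1 − 2s) f(s) ds. -/

import Mathlib

open MeasureTheory Filter Set
open scoped Topology

/-- Piecewise continuity on `[0,1]`: continuity within `[0,1]` away from a finite set. -/
def PiecewiseContinuousOn (f : ℝ → ℝ) : Prop :=
  ∃ S : Finset ℝ, ∀ x ∈ Set.Icc (0:ℝ) 1, x ∉ S → ContinuousWithinAt f (Set.Icc (0:ℝ) 1) x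

/-- The global location `u(γ, f)`. -/
noncomputable def uLoc (γ : ℝ) (f : ℝ → ℝ) : ℝ :=
  (1/γ) * Real.log ((∫ s in (0:ℝ)..1, Real.exp (γ * s)) /
    (∫ s in (0:ℝ)..1, Real.exp (γ * (s - f s))))

/-- The limiting variance `σ²(γ, f)`. -/
noncomputable def sigmaSq (γ : ℝ) (f : ℝ → ℝ) : ℝ :=
  (1/(Real.exp γ - 1)^2) *
    ∫ s in (0:ℝ)..1,
      (Real.exp (2*γ*(uLoc γ f + s - f s)) - Real.exp (2*γ*s))

section helpers

private lemma monoInt {g : ℝ → ℝ} (hg : MonotoneOn g (Set.Icc 0 1)) :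
    IntervalIntegrable g volume 0 1 := by
  apply MonotoneOn.intervalIntegrable
  rwa [Set.uIcc_of_le (by norm_num : (0:ℝ) ≤ 1)]

private lemma antiInt {g : ℝ → ℝ} (hg : AntitoneOn g (Set.Icc 0 1)) :
    IntervalIntegrable g volume 0 1 := by
  apply AntitoneOn.intervalIntegrable
  rwa [Set.uIcc_of_le (by norm_num : (0:ℝ) ≤ 1)]

private lemma expInt {g : ℝ → ℝ} (hg : MonotoneOn g (Set.Icc 0 1)) (c : ℝ) :
    IntervalIntegrable (fun s => Real.exp (c * g s)) volume 0 1 := by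
  rcases le_or_gt 0 c with hc | hc
  · refine monoInt (fun x hx y hy hxy => ?_)
    exact Real.exp_le_exp.2 (mul_le_mul_of_nonneg_left (hg hx hy hxy) hc)
  · refine antiInt (fun x hx y hy hxy => ?_)
    exact Real.exp_le_exp.2 (mul_le_mul_of_nonpos_left (hg hx hy hxy) hc.le)

private lemma sqInt {g : ℝ → ℝ} (hg : MonotoneOn g (Set.Icc 0 1)) (M : ℝ)
    (hb : ∀ x ∈ Set.Icc (0:ℝ) 1, |g x| ≤ M) :
    IntervalIntegrable (fun s => (g s)^2) volume 0 1 := by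
  have h1 : MonotoneOn (fun s => (g s + M)^2) (Set.Icc 0 1) := by
    intro x hx y hy hxy
    have hx0 : 0 ≤ g x + M := by have := (abs_le.1 (hb x hx)).1; linarith
    have h2 : g x + M ≤ g y + M := by have := hg hx hy hxy; linarith
    exact pow_le_pow_left₀ hx0 h2 2
  have h3 : IntervalIntegrable (fun s => (g s + M)^2 - 2*M*(g s) - M^2) volume 0 1 :=
    ((monoInt h1).sub ((monoInt hg).const_mul (2*M))).sub intervalIntegrable_const
  have h4 : (fun s => (g s)^2) = fun s => (g s + M)^2 - 2*M*(g s) - M^2 := by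
    funext s; ring
  rw [h4]; exact h3

private lemma cube_littleO : (fun γ : ℝ => γ^3) =o[𝓝 (0:ℝ)] fun γ => γ^2 := by
  have hid : (fun γ : ℝ => γ) =o[𝓝 (0:ℝ)] (fun _ => (1:ℝ)) :=
    (Asymptotics.isLittleO_one_iff ℝ).2 (by simpa using (continuous_id'.tendsto (0:ℝ)))
  have := hid.mul_isBigO (Asymptotics.isBigO_refl (fun γ : ℝ => γ^2) (𝓝 (0:ℝ)))
  refine this.congr' (Eventually.of_forall fun γ => by ring) (Eventually.of_forall fun γ => by ring)

private lemma taylor2 {g : ℝ → ℝ} (hg : MonotoneOn g (Set.Icc 0 1)) (M : ℝ) (hM : 1 ≤ M)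
    (hb : ∀ x ∈ Set.Icc (0:ℝ) 1, |g x| ≤ M) :
    (fun γ : ℝ => (∫ s in (0:ℝ)..1, Real.exp (γ * g s))
      - (1 + γ * (∫ s in (0:ℝ)..1, g s) + γ^2/2 * (∫ s in (0:ℝ)..1, (g s)^2)))
      =o[𝓝 (0:ℝ)] fun γ => γ^2 := by
  have hM0 : (0:ℝ) < M := lt_of_lt_of_le one_pos hM
  refine Asymptotics.IsBigO.trans_isLittleO ?_ cube_littleO
  rw [Asymptotics.isBigO_iff]
  refine ⟨2/9 * M^3, ?_⟩
  have hev : ∀ᶠ γ : ℝ in 𝓝 0, |γ| ≤ 1/M := by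
    filter_upwards [Metric.ball_mem_nhds (0:ℝ) (by positivity : (0:ℝ) < 1/M)] with γ hγ
    have h2 := Metric.mem_ball.1 hγ
    rw [Real.dist_eq, sub_zero] at h2
    exact h2.le
  filter_upwards [hev] with γ hγ
  have hPint : IntervalIntegrable (fun s => 1 + γ * g s + γ^2/2 * (g s)^2) volume 0 1 :=
    (intervalIntegrable_const.add ((monoInt hg).const_mul γ)).add ((sqInt hg M hb).const_mul (γ^2/2))
  have hPval : (∫ s in (0:ℝ)..1, (1 + γ * g s + γ^2/2 * (g s)^2))
      = 1 + γ * (∫ s in (0:ℝ)..1, g s) + γ^2/2 * (∫ s in (0:ℝ)..1, (g s)^2) := by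
    rw [intervalIntegral.integral_add (intervalIntegrable_const.add ((monoInt hg).const_mul γ))
      ((sqInt hg M hb).const_mul (γ^2/2)),
      intervalIntegral.integral_add intervalIntegrable_const ((monoInt hg).const_mul γ),
      intervalIntegral.integral_const_mul, intervalIntegral.integral_const_mul]
    simp
  have hsplit : (∫ s in (0:ℝ)..1, Real.exp (γ * g s))
      - (1 + γ * (∫ s in (0:ℝ)..1, g s) + γ^2/2 * (∫ s in (0:ℝ)..1, (g s)^2))
      = ∫ s in (0:ℝ)..1, (Real.exp (γ * g s) - (1 + γ * g s + γ^2/2 * (g s)^2)) := by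
    rw [intervalIntegral.integral_sub (expInt hg γ) hPint, hPval]
  rw [hsplit]
  have hbound : ∀ s ∈ Set.uIoc (0:ℝ) 1,
      ‖Real.exp (γ * g s) - (1 + γ * g s + γ^2/2 * (g s)^2)‖ ≤ 2/9 * M^3 * |γ|^3 := by
    intro s hs
    have hs' : s ∈ Set.Icc (0:ℝ) 1 := by
      rw [Set.uIoc_of_le (by norm_num : (0:ℝ) ≤ 1)] at hs
      exact Set.Ioc_subset_Icc_self hs
    have hgs := hb s hs'
    have hx : |γ * g s| ≤ 1 := by
      rw [abs_mul]
      calc |γ| * |g s| ≤ (1/M) * M := by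
            apply mul_le_mul hγ hgs (abs_nonneg _) (by positivity)
        _ = 1 := by field_simp
    have hexb := Real.exp_bound hx (by norm_num : 0 < 3)
    have hsum : ∑ m ∈ Finset.range 3, (γ * g s) ^ m / m.factorial
        = 1 + γ * g s + γ^2/2 * (g s)^2 := by
      simp [Finset.sum_range_succ, Nat.factorial]
      ring
    rw [hsum] at hexb
    rw [Real.norm_eq_abs]
    calc |Real.exp (γ * g s) - (1 + γ * g s + γ^2/2 * (g s)^2)|
        ≤ |γ * g s| ^ 3 * ((3:ℕ).succ / ((3:ℕ).factorial * 3)) := hexb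
      _ ≤ (|γ| * M)^3 * (2/9) := by
          apply mul_le_mul
          · rw [abs_mul]
            exact pow_le_pow_left₀ (by positivity) (mul_le_mul_of_nonneg_left hgs (abs_nonneg _)) 3
          · norm_num [Nat.factorial]
          · positivity
          · positivity
      _ = 2/9 * M^3 * |γ|^3 := by ring
  calc ‖∫ s in (0:ℝ)..1, (Real.exp (γ * g s) - (1 + γ * g s + γ^2/2 * (g s)^2))‖
      ≤ 2/9 * M^3 * |γ|^3 * |1 - 0| :=
        intervalIntegral.norm_integral_le_of_norm_le_const hbound
    _ = 2/9 * M^3 * ‖γ^3‖ := by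
        simp [Real.norm_eq_abs, abs_pow]

private lemma mulo {u u' v v' : ℝ → ℝ} (hu : u =O[𝓝 (0:ℝ)] (fun _ => (1:ℝ)))
    (hv' : v' =O[𝓝 (0:ℝ)] (fun _ => (1:ℝ)))
    (h1 : (fun γ => u γ - u' γ) =o[𝓝 (0:ℝ)] fun γ : ℝ => γ^2)
    (h2 : (fun γ => v γ - v' γ) =o[𝓝 (0:ℝ)] fun γ : ℝ => γ^2) :
    (fun γ => u γ * v γ - u' γ * v' γ) =o[𝓝 (0:ℝ)] fun γ : ℝ => γ^2 := by
  have hA : (fun x => u x * (v x - v' x)) =o[𝓝 (0:ℝ)] fun γ : ℝ => γ^2 :=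
    (hu.mul_isLittleO h2).congr' (Eventually.of_forall fun _ => rfl)
      (Eventually.of_forall fun x => one_mul _)
  have hB : (fun x => (u x - u' x) * v' x) =o[𝓝 (0:ℝ)] fun γ : ℝ => γ^2 :=
    (h1.mul_isBigO hv').congr' (Eventually.of_forall fun _ => rfl)
      (Eventually.of_forall fun x => mul_one _)
  exact (hA.add hB).congr' (Eventually.of_forall fun γ => by ring)
    (Eventually.of_forall fun _ => rfl)

private noncomputable def Af (γ : ℝ) : ℝ := ∫ s in (0:ℝ)..1, Real.exp (γ * s)

private noncomputable def Bf (f : ℝ → ℝ) (γ : ℝ) : ℝ :=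
  ∫ s in (0:ℝ)..1, Real.exp (γ * (s - f s))

end helpers

/-- the limiting variance `σ²(γ,f)` converges, as `γ → 0⁺`, to
`∫₀¹ f² − (∫₀¹ f)² + ∫₀¹ (1−2s) f(s) ds`. -/
theorem sigmaSq_tendsto_of_gamma_to_zero (f : ℝ → ℝ)
    (hdec : AntitoneOn f (Set.Icc (0:ℝ) 1))
    (hpc : PiecewiseContinuousOn f)
    (hnc : ∃ x ∈ Set.Icc (0:ℝ) 1, ∃ y ∈ Set.Icc (0:ℝ) 1, f x ≠ f y)
    (hf1 : f 1 = 0) :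
    Tendsto (fun γ : ℝ => sigmaSq γ f) (𝓝[>] 0)
      (𝓝 ((∫ s in (0:ℝ)..1, (f s)^2) - (∫ s in (0:ℝ)..1, f s)^2
          + ∫ s in (0:ℝ)..1, (1 - 2*s) * f s)) := by
  have h01 : (0:ℝ) ∈ Set.Icc (0:ℝ) 1 := by norm_num
  have h11 : (1:ℝ) ∈ Set.Icc (0:ℝ) 1 := by norm_num
  have hf_nonneg : ∀ x ∈ Set.Icc (0:ℝ) 1, 0 ≤ f x := fun x hx => hf1 ▸ hdec hx h11 hx.2
  have hf_le : ∀ x ∈ Set.Icc (0:ℝ) 1, f x ≤ f 0 := fun x hx => hdec h01 hx hx.1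
  set M : ℝ := max 1 (f 0) with hMdef
  have hM1 : 1 ≤ M := le_max_left _ _
  have hgmono : MonotoneOn (fun s => s - f s) (Set.Icc (0:ℝ) 1) := by
    intro x hx y hy hxy
    have := hdec hx hy hxy
    dsimp only
    linarith
  have hgb : ∀ x ∈ Set.Icc (0:ℝ) 1, |(fun s => s - f s) x| ≤ M := by
    intro x hx
    have h1 := hf_le x hx
    have h2 := hf_nonneg x hx
    have h3 := le_max_right 1 (f 0)
    rw [abs_le]
    constructor
    · dsimp only; have := hx.1; linarith
    · dsimp only; have := hx.2; linarith
  -- abbreviations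
  set m1 : ℝ := ∫ s in (0:ℝ)..1, (s - f s) with hm1def
  set m2 : ℝ := ∫ s in (0:ℝ)..1, (s - f s)^2 with hm2def
  set L : ℝ := m2 - m1^2 - 1/12 with hLdef
  -- Taylor expansions
  have hB : (fun γ : ℝ => Bf f γ - (1 + γ*m1 + γ^2/2*m2)) =o[𝓝 (0:ℝ)] fun γ : ℝ => γ^2 :=
    taylor2 hgmono M hM1 hgb
  have hA : (fun γ : ℝ => Af γ - (1 + γ*(1/2) + γ^2/2*(1/3))) =o[𝓝 (0:ℝ)] fun γ : ℝ => γ^2 := by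
    have hid : MonotoneOn (fun s : ℝ => s) (Set.Icc (0:ℝ) 1) := fun x _ y _ h => h
    have hidb : ∀ x ∈ Set.Icc (0:ℝ) 1, |(fun s : ℝ => s) x| ≤ M := by
      intro x hx
      dsimp only
      rw [abs_of_nonneg hx.1]
      exact le_trans hx.2 hM1
    have h := taylor2 hid M hM1 hidb
    have e1 : (∫ s in (0:ℝ)..1, s) = 1/2 := by rw [integral_id]; norm_num
    have e2 : (∫ s in (0:ℝ)..1, s^2) = 1/3 := by
      rw [integral_pow]; norm_num
    rw [e1, e2] at h
    exact h
  -- compositions with γ ↦ 2γ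
  have h2γ : Tendsto (fun γ : ℝ => 2*γ) (𝓝 (0:ℝ)) (𝓝 (0:ℝ)) := by
    simpa using (tendsto_id : Tendsto id (𝓝 (0:ℝ)) (𝓝 0)).const_mul (2:ℝ)
  have hsq4 : (fun γ : ℝ => (2*γ)^2) =O[𝓝 (0:ℝ)] fun γ : ℝ => γ^2 := by
    rw [Asymptotics.isBigO_iff]
    refine ⟨4, Eventually.of_forall fun γ => ?_⟩
    rw [Real.norm_eq_abs, Real.norm_eq_abs, mul_pow, abs_mul]
    norm_num
  have hB2 : (fun γ : ℝ => Bf f (2*γ) - (1 + (2*γ)*m1 + (2*γ)^2/2*m2)) =o[𝓝 (0:ℝ)]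
      fun γ : ℝ => γ^2 := by
    have h := (hB.comp_tendsto h2γ)
    simp only [Function.comp_def] at h
    exact h.trans_isBigO hsq4
  have hA2 : (fun γ : ℝ => Af (2*γ) - (1 + (2*γ)*(1/2) + (2*γ)^2/2*(1/3))) =o[𝓝 (0:ℝ)]
      fun γ : ℝ => γ^2 := by
    have h := (hA.comp_tendsto h2γ)
    simp only [Function.comp_def] at h
    exact h.trans_isBigO hsq4
  -- O(1) facts
  have hsqO : (fun γ : ℝ => γ^2) =O[𝓝 (0:ℝ)] (fun _ => (1:ℝ)) := by
    have : Tendsto (fun γ : ℝ => γ^2) (𝓝 (0:ℝ)) (𝓝 (0:ℝ)) := by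
      have := (continuous_pow 2).tendsto (0:ℝ)
      simpa using this
    exact this.isBigO_one ℝ
  have polyO : ∀ a b c : ℝ, (fun γ : ℝ => a + γ*b + γ^2/2*c) =O[𝓝 (0:ℝ)] (fun _ => (1:ℝ)) := by
    intro a b c
    have hcont : Continuous (fun γ : ℝ => a + γ*b + γ^2/2*c) := by fun_prop
    exact (hcont.tendsto 0).isBigO_one ℝ
  have poly2O : ∀ a b c : ℝ, (fun γ : ℝ => a + (2*γ)*b + (2*γ)^2/2*c) =O[𝓝 (0:ℝ)]
      (fun _ => (1:ℝ)) := by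
    intro a b c
    have hcont : Continuous (fun γ : ℝ => a + (2*γ)*b + (2*γ)^2/2*c) := by fun_prop
    exact (hcont.tendsto 0).isBigO_one ℝ
  have hAO : Af =O[𝓝 (0:ℝ)] (fun _ => (1:ℝ)) := by
    have h1 := (hA.trans_isBigO hsqO).isBigO
    have h2 := h1.add (polyO 1 (1/2) (1/3))
    have h3 : (fun γ : ℝ => Af γ - (1 + γ*(1/2) + γ^2/2*(1/3)) + (1 + γ*(1/2) + γ^2/2*(1/3)))
        = Af := by funext γ; ring
    rw [h3] at h2
    simpa using h2
  have hBO : Bf f =O[𝓝 (0:ℝ)] (fun _ => (1:ℝ)) := by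
    have h1 := (hB.trans_isBigO hsqO).isBigO
    have h2 := h1.add (polyO 1 m1 m2)
    have h3 : (fun γ : ℝ => Bf f γ - (1 + γ*m1 + γ^2/2*m2) + (1 + γ*m1 + γ^2/2*m2))
        = Bf f := by funext γ; ring
    rw [h3] at h2
    simpa using h2
  have hA2O : (fun γ : ℝ => Af (2*γ)) =O[𝓝 (0:ℝ)] (fun _ => (1:ℝ)) := by
    have h1 := (hA2.trans_isBigO hsqO).isBigO
    have h2 := h1.add (poly2O 1 (1/2) (1/3))
    have h3 : (fun γ : ℝ => Af (2*γ) - (1 + (2*γ)*(1/2) + (2*γ)^2/2*(1/3))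
        + (1 + (2*γ)*(1/2) + (2*γ)^2/2*(1/3))) = fun γ => Af (2*γ) := by funext γ; ring
    rw [h3] at h2
    simpa using h2
  have hB2O : (fun γ : ℝ => Bf f (2*γ)) =O[𝓝 (0:ℝ)] (fun _ => (1:ℝ)) := by
    have h1 := (hB2.trans_isBigO hsqO).isBigO
    have h2 := h1.add (poly2O 1 m1 (m2*2/2))
    have h3 : (fun γ : ℝ => Bf f (2*γ) - (1 + (2*γ)*m1 + (2*γ)^2/2*m2)
        + (1 + (2*γ)*m1 + (2*γ)^2/2*(m2*2/2))) = fun γ => Bf f (2*γ) := by funext γ; ring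
    rw [← h3]
    exact h1.add (poly2O 1 m1 (m2*2/2))
  -- the main little-o statement for the numerator
  have hAAO : (fun γ : ℝ => Af γ * Af γ) =O[𝓝 (0:ℝ)] (fun _ => (1:ℝ)) := by
    have := hAO.mul hAO
    simpa using this
  have s1 : (fun γ : ℝ => Af γ * Af γ
      - (1 + γ*(1/2) + γ^2/2*(1/3)) * (1 + γ*(1/2) + γ^2/2*(1/3)))
      =o[𝓝 (0:ℝ)] fun γ : ℝ => γ^2 := mulo hAO (polyO 1 (1/2) (1/3)) hA hA
  have s2 : (fun γ : ℝ => (Af γ * Af γ) * Bf f (2*γ)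
      - ((1 + γ*(1/2) + γ^2/2*(1/3)) * (1 + γ*(1/2) + γ^2/2*(1/3)))
        * (1 + (2*γ)*m1 + (2*γ)^2/2*m2))
      =o[𝓝 (0:ℝ)] fun γ : ℝ => γ^2 := mulo hAAO (poly2O 1 m1 m2) s1 hB2
  have s3 : (fun γ : ℝ => Bf f γ * Bf f γ - (1 + γ*m1 + γ^2/2*m2) * (1 + γ*m1 + γ^2/2*m2))
      =o[𝓝 (0:ℝ)] fun γ : ℝ => γ^2 := mulo hBO (polyO 1 m1 m2) hB hB
  have s4 : (fun γ : ℝ => Af (2*γ) * (Bf f γ * Bf f γ)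
      - (1 + (2*γ)*(1/2) + (2*γ)^2/2*(1/3)) * ((1 + γ*m1 + γ^2/2*m2) * (1 + γ*m1 + γ^2/2*m2)))
      =o[𝓝 (0:ℝ)] fun γ : ℝ => γ^2 := mulo hA2O (polyO 1 m1 m2 |>.mul (polyO 1 m1 m2)
        |>.trans (by
          rw [Asymptotics.isBigO_iff]
          exact ⟨1, Eventually.of_forall fun γ => by simp⟩)) hA2 s3
  -- polynomial part
  have hpolyo : (fun γ : ℝ =>
      ((1 + γ*(1/2) + γ^2/2*(1/3)) * (1 + γ*(1/2) + γ^2/2*(1/3))) * (1 + (2*γ)*m1 + (2*γ)^2/2*m2)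
      - (1 + (2*γ)*(1/2) + (2*γ)^2/2*(1/3)) * ((1 + γ*m1 + γ^2/2*m2) * (1 + γ*m1 + γ^2/2*m2))
      - L*γ^2) =o[𝓝 (0:ℝ)] fun γ : ℝ => γ^2 := by
    have hident : (fun γ : ℝ =>
        ((1 + γ*(1/2) + γ^2/2*(1/3)) * (1 + γ*(1/2) + γ^2/2*(1/3))) * (1 + (2*γ)*m1 + (2*γ)^2/2*m2)
        - (1 + (2*γ)*(1/2) + (2*γ)^2/2*(1/3)) * ((1 + γ*m1 + γ^2/2*m2) * (1 + γ*m1 + γ^2/2*m2))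
        - L*γ^2)
        = fun γ : ℝ => γ^3 * ((m2 + 1/6 - m1/6 - m1*m2 - m1^2)
          + γ*(m2/2 + m1/3 + 1/36 - m2^2/4 - m1*m2 - 2/3*m1^2)
          + γ^2*(m2/3 + m1/18 - m2^2/4 - 2/3*m1*m2)
          + γ^3*(m2/18 - m2^2/6)) := by
      funext γ
      rw [hLdef]
      ring
    rw [hident]
    have hQO : (fun γ : ℝ => (m2 + 1/6 - m1/6 - m1*m2 - m1^2)
          + γ*(m2/2 + m1/3 + 1/36 - m2^2/4 - m1*m2 - 2/3*m1^2)
          + γ^2*(m2/3 + m1/18 - m2^2/4 - 2/3*m1*m2)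
          + γ^3*(m2/18 - m2^2/6)) =O[𝓝 (0:ℝ)] (fun _ => (1:ℝ)) := by
      have hcont : Continuous (fun γ : ℝ => (m2 + 1/6 - m1/6 - m1*m2 - m1^2)
          + γ*(m2/2 + m1/3 + 1/36 - m2^2/4 - m1*m2 - 2/3*m1^2)
          + γ^2*(m2/3 + m1/18 - m2^2/4 - 2/3*m1*m2)
          + γ^3*(m2/18 - m2^2/6)) := by fun_prop
      exact (hcont.tendsto 0).isBigO_one ℝ
    have := cube_littleO.mul_isBigO hQO
    exact this.congr' (Eventually.of_forall fun _ => rfl)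
      (Eventually.of_forall fun γ => by ring)
  have hN : (fun γ : ℝ => Af γ * Af γ * Bf f (2*γ) - Af (2*γ) * (Bf f γ * Bf f γ) - L*γ^2)
      =o[𝓝 (0:ℝ)] fun γ : ℝ => γ^2 := by
    have := (s2.sub s4).add hpolyo
    exact this.congr' (Eventually.of_forall fun γ => by ring)
      (Eventually.of_forall fun _ => rfl)
  -- limit of the quotient
  have hdiv : Tendsto (fun γ : ℝ => (Af γ * Af γ * Bf f (2*γ) - Af (2*γ) * (Bf f γ * Bf f γ))/γ^2)
      (𝓝[>] (0:ℝ)) (𝓝 L) := by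
    have h0 := hN.tendsto_div_nhds_zero
    have h1 : Tendsto (fun γ : ℝ =>
        (Af γ * Af γ * Bf f (2*γ) - Af (2*γ) * (Bf f γ * Bf f γ) - L*γ^2)/γ^2 + L)
        (𝓝 (0:ℝ)) (𝓝 L) := by
      have := h0.add (tendsto_const_nhds (x := L))
      simpa using this
    refine Tendsto.congr' ?_ (h1.mono_left nhdsWithin_le_nhds)
    filter_upwards [self_mem_nhdsWithin] with γ hγ
    have hγ0 : γ ≠ 0 := ne_of_gt (mem_Ioi.1 hγ)
    field_simp
    ring
  have hpoly_tendsto : ∀ a b c : ℝ, Tendsto (fun γ : ℝ => a + γ*b + γ^2/2*c) (𝓝 (0:ℝ)) (𝓝 a) := by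
    intro a b c
    have hcont : Continuous (fun γ : ℝ => a + γ*b + γ^2/2*c) := by fun_prop
    have := hcont.tendsto 0
    simpa using this
  have htA : Tendsto Af (𝓝[>] (0:ℝ)) (𝓝 1) := by
    have h1 : Tendsto (fun γ : ℝ => Af γ - (1 + γ*(1/2) + γ^2/2*(1/3))) (𝓝 (0:ℝ)) (𝓝 0) :=
      (Asymptotics.isLittleO_one_iff ℝ).1 (hA.trans_isBigO hsqO)
    have h2 := h1.add (hpoly_tendsto 1 (1/2) (1/3))
    have h3 : (fun γ : ℝ => Af γ - (1 + γ*(1/2) + γ^2/2*(1/3)) + (1 + γ*(1/2) + γ^2/2*(1/3)))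
        = Af := by funext γ; ring
    rw [h3] at h2
    simpa using h2.mono_left nhdsWithin_le_nhds
  have htB : Tendsto (Bf f) (𝓝[>] (0:ℝ)) (𝓝 1) := by
    have h1 : Tendsto (fun γ : ℝ => Bf f γ - (1 + γ*m1 + γ^2/2*m2)) (𝓝 (0:ℝ)) (𝓝 0) :=
      (Asymptotics.isLittleO_one_iff ℝ).1 (hB.trans_isBigO hsqO)
    have h2 := h1.add (hpoly_tendsto 1 m1 m2)
    have h3 : (fun γ : ℝ => Bf f γ - (1 + γ*m1 + γ^2/2*m2) + (1 + γ*m1 + γ^2/2*m2))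
        = Bf f := by funext γ; ring
    rw [h3] at h2
    simpa using h2.mono_left nhdsWithin_le_nhds
  have htRHS : Tendsto (fun γ : ℝ =>
      (Af γ * Af γ * Bf f (2*γ) - Af (2*γ) * (Bf f γ * Bf f γ))/γ^2
        * (Af γ * Af γ * (Bf f γ * Bf f γ))⁻¹) (𝓝[>] (0:ℝ)) (𝓝 L) := by
    have hd : Tendsto (fun γ : ℝ => Af γ * Af γ * (Bf f γ * Bf f γ)) (𝓝[>] (0:ℝ)) (𝓝 1) := by
      have := (htA.mul htA).mul (htB.mul htB)
      simpa using this
    have := hdiv.mul (hd.inv₀ one_ne_zero)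
    simpa using this
  -- eventual equality with sigmaSq
  have hev : ∀ᶠ γ in 𝓝[>] (0:ℝ), sigmaSq γ f =
      (Af γ * Af γ * Bf f (2*γ) - Af (2*γ) * (Bf f γ * Bf f γ))/γ^2
        * (Af γ * Af γ * (Bf f γ * Bf f γ))⁻¹ := by
    filter_upwards [self_mem_nhdsWithin] with γ hγ
    have hγ0 : (0:ℝ) < γ := mem_Ioi.1 hγ
    have hγne : γ ≠ 0 := ne_of_gt hγ0
    have hintA : ∀ c : ℝ, IntervalIntegrable (fun x : ℝ => Real.exp (c * x)) volume 0 1 :=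
      fun c => (Real.continuous_exp.comp (continuous_const.mul continuous_id)).intervalIntegrable 0 1
    have hApos : 0 < Af γ := by
      have hle : ∀ x ∈ Set.Icc (0:ℝ) 1, (1:ℝ) ≤ Real.exp (γ * x) := fun x hx =>
        Real.one_le_exp (mul_nonneg hγ0.le hx.1)
      have h := intervalIntegral.integral_mono_on (by norm_num : (0:ℝ) ≤ 1)
        intervalIntegrable_const (hintA γ) hle
      have h2 : (∫ _x in (0:ℝ)..1, (1:ℝ)) = 1 := by simp
      rw [h2] at h
      calc (0:ℝ) < 1 := one_pos
        _ ≤ Af γ := h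
    have hBpos : 0 < Bf f γ := by
      have hle : ∀ x ∈ Set.Icc (0:ℝ) 1, Real.exp (-(γ*M)) ≤ Real.exp (γ * (x - f x)) := by
        intro x hx
        apply Real.exp_le_exp.2
        have := (abs_le.1 (hgb x hx)).1
        have h2 : -M ≤ x - f x := this
        nlinarith
      have h := intervalIntegral.integral_mono_on (by norm_num : (0:ℝ) ≤ 1)
        intervalIntegrable_const (expInt hgmono γ) hle
      have h2 : (∫ _x in (0:ℝ)..1, Real.exp (-(γ*M))) = Real.exp (-(γ*M)) := by simp
      rw [h2] at h
      calc (0:ℝ) < Real.exp (-(γ*M)) := Real.exp_pos _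
        _ ≤ Bf f γ := h
    have hexp1 : Real.exp γ - 1 = γ * Af γ := by
      have h2 : Af γ = γ⁻¹ * (Real.exp γ - 1) := by
        rw [Af, intervalIntegral.integral_comp_mul_left Real.exp hγne]
        norm_num
      rw [h2]
      field_simp
    have hABpos : 0 < Af γ / Bf f γ := div_pos hApos hBpos
    have huexp : Real.exp (2*γ*uLoc γ f) = (Af γ / Bf f γ) * (Af γ / Bf f γ) := by
      have h1 : uLoc γ f = (1/γ) * Real.log (Af γ / Bf f γ) := rfl
      have h2 : 2*γ*uLoc γ f = Real.log (Af γ / Bf f γ) + Real.log (Af γ / Bf f γ) := by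
        rw [h1]; field_simp; ring
      rw [h2, Real.exp_add, Real.exp_log hABpos]
    have hint2 : IntervalIntegrable (fun s => Real.exp ((2*γ) * (s - f s))) volume 0 1 :=
      expInt hgmono (2*γ)
    have hintc : IntervalIntegrable
        (fun s => Real.exp (2*γ*uLoc γ f) * Real.exp ((2*γ) * (s - f s))) volume 0 1 :=
      hint2.const_mul _
    have heq : (fun s : ℝ => Real.exp (2*γ*(uLoc γ f + s - f s)) - Real.exp (2*γ*s))
        = fun s => Real.exp (2*γ*uLoc γ f) * Real.exp ((2*γ) * (s - f s))
          - Real.exp ((2*γ) * s) := by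
      funext s
      rw [← Real.exp_add]
      have e1 : 2*γ*uLoc γ f + (2*γ)*(s - f s) = 2*γ*(uLoc γ f + s - f s) := by ring
      have e2 : 2*γ*s = (2*γ)*s := by ring
      rw [e1, e2]
    have hinner : (∫ s in (0:ℝ)..1,
        (Real.exp (2*γ*(uLoc γ f + s - f s)) - Real.exp (2*γ*s)))
        = Real.exp (2*γ*uLoc γ f) * Bf f (2*γ) - Af (2*γ) := by
      rw [heq, intervalIntegral.integral_sub hintc (hintA (2*γ)),
        intervalIntegral.integral_const_mul]
      rfl
    rw [sigmaSq, hinner, huexp, hexp1]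
    have hAne : Af γ ≠ 0 := ne_of_gt hApos
    have hBne : Bf f γ ≠ 0 := ne_of_gt hBpos
    field_simp
  -- identify the limit
  have hfInt : IntervalIntegrable f volume 0 1 := antiInt hdec
  have hf2Int : IntervalIntegrable (fun s => (f s)^2) volume 0 1 := by
    apply antiInt
    intro x hx y hy hxy
    exact pow_le_pow_left₀ (hf_nonneg y hy) (hdec hx hy hxy) 2
  have hg2Int : IntervalIntegrable (fun s => (s - f s)^2) volume 0 1 := sqInt hgmono M hgb
  have hidInt : IntervalIntegrable (fun x : ℝ => x) volume 0 1 :=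
    Continuous.intervalIntegrable (by fun_prop) 0 1
  have hm1eq : m1 = 1/2 - ∫ s in (0:ℝ)..1, f s := by
    rw [hm1def, intervalIntegral.integral_sub hidInt hfInt, integral_id]
    norm_num
  have hXeq : (fun s : ℝ => (1 - 2*s) * f s)
      = fun s => (s - f s)^2 - (f s)^2 - s^2 + f s := by funext s; ring
  have hX : (∫ s in (0:ℝ)..1, (1 - 2*s) * f s)
      = m2 - (∫ s in (0:ℝ)..1, (f s)^2) - 1/3 + ∫ s in (0:ℝ)..1, f s := by
    rw [hXeq,
      intervalIntegral.integral_add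
        ((hg2Int.sub hf2Int).sub ((continuous_pow 2).intervalIntegrable 0 1)) hfInt,
      intervalIntegral.integral_sub (hg2Int.sub hf2Int)
        ((continuous_pow 2).intervalIntegrable 0 1),
      intervalIntegral.integral_sub hg2Int hf2Int, integral_pow]
    rw [hm2def]
    norm_num
  have hLeq : (∫ s in (0:ℝ)..1, (f s)^2) - (∫ s in (0:ℝ)..1, f s)^2
      + (∫ s in (0:ℝ)..1, (1 - 2*s) * f s) = L := by
    rw [hX, hLdef, hm1eq]
    ring
  rw [← hLeq] at htRHS
  exact Tendsto.congr' (by filter_upwards [hev] with γ h using h.symm) htRHS
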